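/- A non-empty normal sub-heap P of a near-truss T is a paragon if and only if P is left-closed and every equivalence class of the sub-heap relation ∼_P is right-closed. -/

import Mathlib

/-- A ternary operation is a heap operation if it is associative and satisfies
the Mal'cev identities. -/
def IsHeap {T : Type*} (br : T → T → T → T) : Prop :=
  (∀ a b c d e : T, br (br a b c) d e = br a b (br c d e)) ∧
  (∀ a b : T, br a a b = b) ∧
  (∀ a b : T, br b a a = b)

/-- A subset `S` is a sub-heap if it is closed under the ternary operation. -/
def IsSubHeap {T : Type*} (br : T → T → T → T) (S : Set T) : Prop :=
  ∀ a ∈ S, ∀ b ∈ S, ∀ c ∈ S, br a b c ∈ S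

/-- The sub-heap relation `a ∼_S b` : `[a,b,s] ∈ S` for all `s ∈ S`. -/
def SRel {T : Type*} (br : T → T → T → T) (S : Set T) (a b : T) : Prop :=
  ∀ s ∈ S, br a b s ∈ S

/-- The equivalence class of `a` under the sub-heap relation `∼_S`. -/
def Cls {T : Type*} (br : T → T → T → T) (S : Set T) (a : T) : Set T :=
  {z | SRel br S z a}

/-- A sub-heap `S` is normal if `[[a,e,s],a,e] ∈ S` for all `a` and all `e, s ∈ S`. -/
def IsNormalSubHeap {T : Type*} (br : T → T → T → T) (S : Set T) : Prop :=
  IsSubHeap br S ∧ ∀ a : T, ∀ e ∈ S, ∀ s ∈ S, br (br a e s) a e ∈ S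

/-- A sub-heap `S` of a pre-truss is left-closed if `[t·s', t·s, s] ∈ S`. -/
def LeftClosed {T : Type*} [Mul T] (br : T → T → T → T) (S : Set T) : Prop :=
  ∀ s ∈ S, ∀ s' ∈ S, ∀ t : T, br (t * s') (t * s) s ∈ S

/-- A sub-heap `S` of a pre-truss is right-closed if `[s'·t, s·t, s] ∈ S`. -/
def RightClosed {T : Type*} [Mul T] (br : T → T → T → T) (S : Set T) : Prop :=
  ∀ s ∈ S, ∀ s' ∈ S, ∀ t : T, br (s' * t) (s * t) s ∈ S

/-- A paragon is a non-empty normal sub-heap all of whose `∼_P`-equivalence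
classes are closed normal sub-heaps. -/
def IsParagon {T : Type*} [Mul T] (br : T → T → T → T) (P : Set T) : Prop :=
  P.Nonempty ∧ IsNormalSubHeap br P ∧
  ∀ a : T, IsNormalSubHeap br (Cls br P a) ∧
    LeftClosed br (Cls br P a) ∧ RightClosed br (Cls br P a)

/-- A left ideal: a non-empty normal sub-heap closed under left multiplication. -/
def IsLeftIdeal {T : Type*} [Mul T] (br : T → T → T → T) (I : Set T) : Prop :=
  I.Nonempty ∧ IsNormalSubHeap br I ∧ ∀ t : T, ∀ i ∈ I, t * i ∈ I

/-- A right ideal: a non-empty normal sub-heap closed under right multiplication. -/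
def IsRightIdeal {T : Type*} [Mul T] (br : T → T → T → T) (I : Set T) : Prop :=
  I.Nonempty ∧ IsNormalSubHeap br I ∧ ∀ t : T, ∀ i ∈ I, i * t ∈ I

/-- A (two-sided) ideal. -/
def IsIdeal {T : Type*} [Mul T] (br : T → T → T → T) (I : Set T) : Prop :=
  I.Nonempty ∧ IsNormalSubHeap br I ∧ ∀ t : T, ∀ i ∈ I, t * i ∈ I ∧ i * t ∈ I

/-! ### Auxiliary machinery: the group retract of a heap at a point `e` -/

/-- Type synonym carrying the group structure of the heap `br` based at `e`. -/
def ShlAux (T : Type*) (br : T → T → T → T) (e : T) : Type _ := T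

namespace ShlAux

section Inst

variable {T : Type*} {br : T → T → T → T} {e : T}

instance : One (ShlAux T br e) := ⟨(e : T)⟩
instance : Mul (ShlAux T br e) := ⟨fun a b => (br a e b : T)⟩
instance : Inv (ShlAux T br e) := ⟨fun a => (br e a e : T)⟩

/-- The group structure on `ShlAux T br e` induced by the heap operation. -/
@[reducible]
def grp (hH : IsHeap br) : Group (ShlAux T br e) :=
  Group.ofLeftAxioms
    (fun a b c => hH.1 a e b e c)
    (fun a => hH.2.1 e a)
    (fun a => by
      have h : ∀ x : T, br (br e x e) e x = e := fun x => by
        rw [hH.1, hH.2.1]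
        exact hH.2.2 x e
      exact h a)

end Inst

/-- The identity cast from `T` into the synonym. -/
def up {T : Type*} (br : T → T → T → T) (e : T) (x : T) : ShlAux T br e := x

theorem up_eq {T : Type*} {br : T → T → T → T} {e : T} (x : ShlAux T br e) :
    up br e x = x := rfl

theorem mulDef {T : Type*} (br : T → T → T → T) (e x y : T) :
    br x e y = up br e x * up br e y := rfl

/-- Every heap bracket is `a * b⁻¹ * c` in the group retract. -/
theorem key {T : Type*} {br : T → T → T → T} (hH : IsHeap br) (e a b c : T) :
    br a b c = up br e a * (up br e b)⁻¹ * up br e c := by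
  have h1 : br a e (br e b e) = br a b e := by
    rw [← hH.1 a e e b e, hH.2.2 e a]
  show br a b c = br (br a e (br e b e)) e c
  rw [h1, hH.1, hH.2.1]

end ShlAux

theorem memEqAux {α : Type*} {s : Set α} {a b : α} (h : a = b) (hb : b ∈ s) : a ∈ s := by
  rw [h]; exact hb


/-- A non-empty normal sub-heap `P` of a near-truss `T` is a paragon iff `P` is
left-closed and every equivalence class of `∼_P` is right-closed. -/
theorem isParagon_iff_nearTruss {T : Type*} [Mul T] (br : T → T → T → T)
    (hH : IsHeap br) (hmul : ∀ a b c : T, a * b * c = a * (b * c))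
    (hdistrib : ∀ a b c d : T, a * br b c d = br (a * b) (a * c) (a * d))
    (P : Set T) (hne : P.Nonempty) (hP : IsNormalSubHeap br P) :
    IsParagon br P ↔
      LeftClosed br P ∧ ∀ a : T, RightClosed br (Cls br P a) := by
  obtain ⟨e, he⟩ := hne
  letI : Group (ShlAux T br e) := ShlAux.grp hH
  have hkey := ShlAux.key hH e
  have hPm : ∀ x ∈ P, ∀ y ∈ P, ShlAux.up br e x * ShlAux.up br e y ∈ P :=
    fun x hx y hy => hP.1 x hx e he y hy
  have hPi : ∀ x ∈ P, (ShlAux.up br e x)⁻¹ ∈ P :=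
    fun x hx => hP.1 e he x hx e he
  have hbr1 : ∀ x y : T, br x y e = ShlAux.up br e x * (ShlAux.up br e y)⁻¹ := by
    intro x y
    rw [hkey]
    exact mul_one (ShlAux.up br e x * (ShlAux.up br e y)⁻¹)
  have hPconj : ∀ t : T, ∀ p ∈ P,
      ShlAux.up br e t * ShlAux.up br e p * (ShlAux.up br e t)⁻¹ ∈ P := by
    intro t p hp
    refine memEqAux ?_ (hP.2 t e he p hp)
    rw [hkey (br t e p) t e]
    exact (mul_one _).symm
  have hPconj' : ∀ t : T, ∀ p ∈ P,
      (ShlAux.up br e t)⁻¹ * ShlAux.up br e p * ShlAux.up br e t ∈ P := by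
    intro t p hp
    refine memEqAux ?_ (hPconj (((ShlAux.up br e t)⁻¹ : ShlAux T br e) : T) p hp)
    simp only [ShlAux.up_eq]
    exact congrArg (fun x => (ShlAux.up br e t)⁻¹ * ShlAux.up br e p * x) (inv_inv (ShlAux.up br e t)).symm
  have hSRel : ∀ a b : T,
      SRel br P a b ↔ ShlAux.up br e a * (ShlAux.up br e b)⁻¹ ∈ P := by
    intro a b
    constructor
    · intro h
      have h2 := h e he
      rwa [hbr1 a b] at h2
    · intro hp s hs
      rw [hkey]
      exact hPm _ hp _ hs
  have hCls : ∀ a z : T,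
      z ∈ Cls br P a ↔ ShlAux.up br e z * (ShlAux.up br e a)⁻¹ ∈ P :=
    fun a z => hSRel z a
  constructor
  · intro h
    refine ⟨?_, fun a => (h.2.2 a).2.2⟩
    have hze : ∀ z : T, ShlAux.up br e z * (ShlAux.up br e e)⁻¹ = ShlAux.up br e z := by
      intro z
      have h1 : ShlAux.up br e e = (1 : ShlAux T br e) := rfl
      rw [h1, inv_one, mul_one]
    have hEq : Cls br P e = P := by
      ext z
      rw [hCls e z, hze z]
      exact Iff.rfl
    have h2 := (h.2.2 e).2.1
    rwa [hEq] at h2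
  · rintro ⟨hLC, hRC⟩
    refine ⟨⟨e, he⟩, hP, fun a => ⟨⟨?_, ?_⟩, ?_, hRC a⟩⟩
    · -- the class is a sub-heap
      intro x hx y hy z hz
      refine (hCls a _).mpr ?_
      rw [hkey]
      exact memEqAux (by simp only [ShlAux.up_eq]; group)
        (hPm _ (hPm _ ((hCls a x).mp hx) _ (hPi _ ((hCls a y).mp hy))) _ ((hCls a z).mp hz))
    · -- the class is a normal sub-heap
      intro t q hq0 s hs0
      have hq := (hCls a q).mp hq0
      have hs := (hCls a s).mp hs0
      refine (hCls a _).mpr ?_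
      rw [hkey, hkey]
      exact memEqAux (by simp only [ShlAux.up_eq]; group)
        (hPm _ (hPconj t _ (hPm _ (hPi _ (hPconj' a _ hq)) _ (hPconj' a _ hs))) _ hq)
    · -- the class is left-closed
      intro s hs0 s' hs'0 t
      have hs := (hCls a s).mp hs0
      have hs' := (hCls a s').mp hs'0
      have hp := hPm _ hs' _ (hPi _ hs)
      have hs'eq : s' =
          br ((ShlAux.up br e s' * (ShlAux.up br e a)⁻¹ *
              (ShlAux.up br e s * (ShlAux.up br e a)⁻¹)⁻¹ : ShlAux T br e) : T) e s := by
        show ShlAux.up br e s' = (ShlAux.up br e s' * (ShlAux.up br e a)⁻¹ *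
            (ShlAux.up br e s * (ShlAux.up br e a)⁻¹)⁻¹) * ShlAux.up br e s
        group
      have hq := hLC e he
        ((ShlAux.up br e s' * (ShlAux.up br e a)⁻¹ *
          (ShlAux.up br e s * (ShlAux.up br e a)⁻¹)⁻¹ : ShlAux T br e) : T) hp t
      rw [hbr1] at hq
      refine (hCls a _).mpr (memEqAux ?_ (hPm _ hq _ hs))
      nth_rewrite 1 [hs'eq]
      erw [hdistrib, hkey, hkey]
      simp only [ShlAux.up_eq]; group
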